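/- The n-th Legendre polynomial satisfies the self-adjoint differential equation [(1 - x^2) P_n'(x)]' + n(n+1) P_n(x) = 0 for all x in (-1, 1). -/

import Mathlib

open Real

section aux
open Polynomial

lemma iteratedDeriv_poly_eval (p : ℝ[X]) (k : ℕ) :
    iteratedDeriv k (fun x : ℝ => p.eval x) = fun x => (derivative^[k] p).eval x := by
  induction k with
  | zero => simp
  | succ k ih =>
    rw [iteratedDeriv_succ, ih]
    funext x
    rw [Function.iterate_succ_apply']
    exact Polynomial.deriv (p := derivative^[k] p)

lemma leibX (p : ℝ[X]) (k : ℕ) :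
    derivative^[k+1] (X * p) = X * derivative^[k+1] p + C ((k : ℝ) + 1) * derivative^[k] p := by
  induction k with
  | zero => simp [derivative_mul]; ring
  | succ k ih =>
    rw [Function.iterate_succ_apply', ih]
    simp only [derivative_add, derivative_mul, derivative_X, derivative_C,
      ← Function.iterate_succ_apply' derivative]
    push_cast
    simp only [map_add, map_mul, map_one, map_ofNat, map_zero, Nat.cast_zero]
    ring

lemma leibV (p : ℝ[X]) (k : ℕ) :
    derivative^[k+2] ((X^2 - 1) * p) = (X^2 - 1) * derivative^[k+2] p
      + C (2*((k : ℝ)+2)) * (X * derivative^[k+1] p)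
      + C (((k : ℝ)+2)*((k : ℝ)+1)) * derivative^[k] p := by
  induction k with
  | zero =>
    show derivative (derivative _) = _
    simp only [derivative_mul, derivative_sub, derivative_one, derivative_X_pow,
      derivative_add, derivative_X, derivative_C, derivative_zero,
      Function.iterate_succ_apply', Function.iterate_zero_apply]
    push_cast
    simp only [map_add, map_mul, map_one, map_ofNat, map_zero, Nat.cast_zero]
    ring
  | succ k ih =>
    rw [Function.iterate_succ_apply', ih]
    simp only [derivative_add, derivative_mul, derivative_sub, derivative_one,
      derivative_X_pow, derivative_X, derivative_C, derivative_zero,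
      ← Function.iterate_succ_apply' derivative]
    push_cast
    simp only [map_add, map_mul, map_one, map_ofNat, map_zero, Nat.cast_zero]
    ring

lemma key (n : ℕ) :
    derivative ((1 - X^2) * derivative (derivative^[n] ((X^2 - 1 : ℝ[X])^n)))
      + C ((n : ℝ) * ((n : ℝ) + 1)) * derivative^[n] ((X^2 - 1 : ℝ[X])^n) = 0 := by
  obtain _ | m := n
  · simp
  set u : ℝ[X] := (X^2 - 1)^(m+1) with hu
  have step1 : (X^2 - 1 : ℝ[X]) * derivative u = C (2*((m:ℝ)+1)) * (X * u) := by
    rw [hu, derivative_pow]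
    have h2 : derivative (X^2 - 1 : ℝ[X]) = C 2 * X := by
      simp [derivative_sub, derivative_X_pow]
      rw [one_add_one_eq_two, map_ofNat]
    rw [h2, Nat.add_sub_cancel, pow_succ (X^2 - 1 : ℝ[X]) m]
    push_cast
    simp only [map_add, map_mul, map_one, map_ofNat, map_zero, Nat.cast_zero]
    ring
  have step2 := congrArg (derivative^[m+2]) step1
  rw [leibV (derivative u) m, iterate_derivative_C_mul, leibX (u) (m+1)] at step2
  simp only [← Function.iterate_succ_apply derivative] at step2
  simp only [Nat.cast_succ]
  simp only [derivative_mul, derivative_sub, derivative_one, derivative_X_pow,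
    derivative_zero, ← Function.iterate_succ_apply' derivative]
  push_cast at step2 ⊢
  simp only [map_add, map_mul, map_one, map_ofNat] at step2 ⊢
  linear_combination (-1 : ℝ[X]) * step2
end aux

/-- The `n`-th Legendre polynomial, defined by Rodrigues' formula. -/
noncomputable def legendreP (n : ℕ) : ℝ → ℝ :=
  fun x => (1 / (2 ^ n * (Nat.factorial n : ℝ))) *
    iteratedDeriv n (fun y : ℝ => (y ^ 2 - 1) ^ n) x

theorem legendre_self_adjoint_ODE (n : ℕ) (x : ℝ) (hx : x ∈ Set.Ioo (-1 : ℝ) 1) :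
    deriv (fun y : ℝ => (1 - y ^ 2) * deriv (legendreP n) y) x
      + (n : ℝ) * ((n : ℝ) + 1) * legendreP n x = 0 := by
  classical
  clear hx
  open Polynomial in
  set c : ℝ := 1 / (2 ^ n * (Nat.factorial n : ℝ)) with hc
  set q : ℝ[X] := C c * derivative^[n] ((X^2 - 1 : ℝ[X])^n) with hq
  have hleg : legendreP n = fun y : ℝ => q.eval y := by
    funext y
    have hfn : (fun y : ℝ => (y ^ 2 - 1) ^ n) = fun y : ℝ => ((X^2 - 1 : ℝ[X])^n).eval y := by
      funext y; simp
    rw [legendreP, hfn, iteratedDeriv_poly_eval, hq, eval_mul, eval_C, hc]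
  have hderiv : deriv (legendreP n) = fun y : ℝ => (derivative q).eval y := by
    funext y
    rw [hleg]
    exact Polynomial.deriv (p := q)
  have hinner : (fun y : ℝ => (1 - y ^ 2) * deriv (legendreP n) y)
      = fun y : ℝ => (((1 - X^2 : ℝ[X]) * derivative q).eval y) := by
    funext y; rw [hderiv]; simp
  rw [hinner, hleg, Polynomial.deriv (p := (1 - X^2 : ℝ[X]) * derivative q)]
  have hk := congrArg (fun p : ℝ[X] => c * p.eval x) (key n)
  simp only [hq, derivative_C_mul]
  have expand : derivative ((1 - X^2 : ℝ[X]) * (C c * derivative (derivative^[n] ((X^2 - 1 : ℝ[X])^n))))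
      = C c * derivative ((1 - X^2 : ℝ[X]) * derivative (derivative^[n] ((X^2 - 1 : ℝ[X])^n))) := by
    rw [show ((1 - X^2 : ℝ[X]) * (C c * derivative (derivative^[n] ((X^2 - 1 : ℝ[X])^n))))
      = C c * ((1 - X^2 : ℝ[X]) * derivative (derivative^[n] ((X^2 - 1 : ℝ[X])^n))) by ring,
      derivative_C_mul]
  rw [expand]
  simp only [eval_add, eval_mul, eval_C, eval_zero, mul_zero] at hk ⊢
  linarith [hk]
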